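/- Let V be a real normed vector space, let z ≥ 1 be a natural number, let g : ℝ → ℝ be z times continuously differentiable, and let x₀, v ∈ V. Define F : ℝ → V by F(t) = g(t) · (x₀ + t·v). Then for every t₀ ∈ ℝ, the z-th derivative of F at t₀ equals g^{(z)}(t₀) · (x₀ + t₀·v) + z · g^{(z−1)}(t₀) · v. -/

import Mathlib

lemma itd_smul_const {V : Type*} [NormedAddCommGroup V] [NormedSpace ℝ V]
    {n : ℕ} {f : ℝ → ℝ} (hf : ContDiff ℝ (n : ℕ∞) f) (c : V) (x : ℝ) :
    iteratedDeriv n (fun t => f t • c) x = iteratedDeriv n f x • c := by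
  have h := (ContinuousLinearMap.id ℝ ℝ).smulRight c |>.iteratedFDeriv_comp_left (hf.contDiffAt (x := x))
    (i := n) le_rfl
  have he : (fun t => f t • c) = ((ContinuousLinearMap.id ℝ ℝ).smulRight c) ∘ f := by
    ext t; simp
  rw [iteratedDeriv_eq_iteratedFDeriv, he, h, iteratedDeriv_eq_iteratedFDeriv]
  simp

lemma itd_add {V : Type*} [NormedAddCommGroup V] [NormedSpace ℝ V]
    {n : ℕ} {f g : ℝ → V} (hf : ContDiff ℝ (n : ℕ∞) f) (hg : ContDiff ℝ (n : ℕ∞) g) (x : ℝ) :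
    iteratedDeriv n (fun t => f t + g t) x = iteratedDeriv n f x + iteratedDeriv n g x := by
  simp_rw [← iteratedDerivWithin_univ]
  exact iteratedDerivWithin_add (Set.mem_univ x) uniqueDiffOn_univ
    hf.contDiffWithinAt hg.contDiffWithinAt

lemma deriv_affine_smul {V : Type*} [NormedAddCommGroup V] [NormedSpace ℝ V]
    (x₀ v : V) {g : ℝ → ℝ} (hg : Differentiable ℝ g) (t : ℝ) :
    deriv (fun t => g t • (x₀ + t • v)) t = deriv g t • (x₀ + t • v) + g t • v := by
  have h1 : HasDerivAt (fun t : ℝ => x₀ + t • v) v t := by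
    simpa using ((hasDerivAt_id t).smul_const v).const_add x₀
  have h2 : HasDerivAt (fun t => g t • (x₀ + t • v)) _ t := (hg t).hasDerivAt.smul h1
  rw [h2.deriv]
  abel

lemma key {V : Type*} [NormedAddCommGroup V] [NormedSpace ℝ V] (x₀ v : V) :
    ∀ n : ℕ, ∀ g : ℝ → ℝ, ContDiff ℝ ((n + 1 : ℕ) : ℕ∞) g → ∀ t₀ : ℝ,
      iteratedDeriv (n + 1) (fun t => g t • (x₀ + t • v)) t₀ =
        iteratedDeriv (n + 1) g t₀ • (x₀ + t₀ • v) +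
          (((n : ℝ) + 1) * iteratedDeriv n g t₀) • v := by
  intro n
  induction n with
  | zero =>
    intro g hg t₀
    rw [show (0:ℕ) + 1 = 1 from rfl, iteratedDeriv_one,
      deriv_affine_smul x₀ v (hg.differentiable (by norm_num)) t₀]
    simp [iteratedDeriv_one]
  | succ n ih =>
    intro g hg t₀
    have hg2 : ContDiff ℝ (((n + 1 : ℕ) : WithTop ℕ∞) + 1) g := by exact_mod_cast hg
    have hg' : ContDiff ℝ ((n + 1 : ℕ) : ℕ∞) (deriv g) := by
      exact_mod_cast (contDiff_succ_iff_deriv.mp hg2).2.2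
    have hgd : Differentiable ℝ g := (contDiff_succ_iff_deriv.mp hg2).1
    have hg1 : ContDiff ℝ ((n + 1 : ℕ) : ℕ∞) g :=
      hg.of_le (by exact_mod_cast Nat.le_succ _)
    rw [iteratedDeriv_succ']
    have hde : deriv (fun t => g t • (x₀ + t • v)) =
        fun t => deriv g t • (x₀ + t • v) + g t • v := by
      funext t; exact deriv_affine_smul x₀ v hgd t
    rw [hde]
    have haff : ContDiff ℝ ((n + 1 : ℕ) : ℕ∞) (fun t : ℝ => x₀ + t • v) :=
      contDiff_const.add (contDiff_id.smul contDiff_const)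
    have hc1 : ContDiff ℝ ((n + 1 : ℕ) : ℕ∞) (fun t : ℝ => deriv g t • (x₀ + t • v)) :=
      hg'.smul haff
    have hc2 : ContDiff ℝ ((n + 1 : ℕ) : ℕ∞) (fun t : ℝ => g t • v) :=
      hg1.smul contDiff_const
    rw [itd_add hc1 hc2 t₀, ih (deriv g) hg' t₀, itd_smul_const hg1 v t₀,
      ← iteratedDeriv_succ', ← iteratedDeriv_succ']
    push_cast
    rw [add_assoc, ← add_smul]
    ring_nf

theorem stmt_7 (V : Type*) [NormedAddCommGroup V] [NormedSpace ℝ V]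
    (z : ℕ) (hz : 1 ≤ z) (g : ℝ → ℝ) (hg : ContDiff ℝ (z : ℕ∞) g)
    (x₀ v : V) (F : ℝ → V) (hF : ∀ t : ℝ, F t = g t • (x₀ + t • v)) (t₀ : ℝ) :
    iteratedDeriv z F t₀ =
      (iteratedDeriv z g t₀) • (x₀ + t₀ • v) +
        ((z : ℝ) * iteratedDeriv (z - 1) g t₀) • v := by
  obtain ⟨n, rfl⟩ := Nat.exists_eq_add_of_le hz
  have hFe : F = fun t => g t • (x₀ + t • v) := funext hF
  subst hFe
  rw [show 1 + n - 1 = n from by omega, show 1 + n = n + 1 from by omega] at *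
  rw [key x₀ v n g hg t₀]
  push_cast
  ring_nf
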